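/- (LCE acceleration for NGS/PGS, third case.) Let 1 ≤ l < k < r ≤ n be indices such that x_l ≻ x_k and x_m ≺ x_k for all m ∈ (l,k), and x_r ≻ x_k and x_m ≺ x_k for all m ∈ (k,r) (i.e., l = prev₋₁[k] and r = next₋₁[k]). If lce(l,k) > lce(k,r), then lce(l,r) = lce(k,r), x_r ≻ x_l, and min{j ∈ (l,n] : x_j ≻ x_l} = r. -/

import Mathlib

namespace LynArr

variable {α : Type*} [LinearOrder α]

/-- Strict lexicographic order on words:
`u ≺ v` iff `u` is a proper prefix of `v`, or at the first differing position `u` is smaller. -/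
def Llt (u v : List α) : Prop := List.Lex (· < ·) u v

/-- The suffix `x_i = x[i..n]` (1-based indexing). -/
def suff (x : List α) (i : ℕ) : List α := x.drop (i - 1)

/-- The subword `x[i..j]` (1-based, inclusive). -/
def sub (x : List α) (i j : ℕ) : List α := (x.drop (i - 1)).take (j - i + 1)

/-- `w` is a Lyndon word: nonempty and lexicographically smaller than
all of its nonempty proper suffixes. -/
def IsLyndon (w : List α) : Prop :=
  w ≠ [] ∧ ∀ k, 0 < k → k < w.length → Llt w (w.drop k)

/-- `w` is an inverse Lyndon word: nonempty and lexicographically greater than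
all of its nonempty proper suffixes. -/
def IsInvLyndon (w : List α) : Prop :=
  w ≠ [] ∧ ∀ k, 0 < k → k < w.length → Llt (w.drop k) w

/-- `lce x i j`: the length of the longest common prefix of the suffixes `x_i` and `x_j`. -/
def lce (x : List α) (i j : ℕ) : ℕ :=
  (((suff x i).zip (suff x j)).takeWhile fun p => p.1 == p.2).length

/-- Auxiliary: lce on raw lists. -/
def lce2 (u v : List α) : ℕ :=
  ((u.zip v).takeWhile fun p => p.1 == p.2).length

lemma lce2_nil_left (v : List α) : lce2 ([] : List α) v = 0 := by simp [lce2]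

lemma lce2_nil_right (u : List α) : lce2 u ([] : List α) = 0 := by simp [lce2]

lemma lce2_cons (a b : α) (u v : List α) :
    lce2 (a :: u) (b :: v) = if a = b then lce2 u v + 1 else 0 := by
  simp only [lce2, List.zip_cons_cons, List.takeWhile_cons, beq_iff_eq]
  split <;> simp

lemma main_lemma : ∀ (b a c : List α), List.Lex (· < ·) b a → List.Lex (· < ·) b c →
    lce2 b c < lce2 a b → lce2 a c = lce2 b c ∧ List.Lex (· < ·) a c := by
  intro b
  induction b with
  | nil =>
    intro a c _ _ hlt
    cases a <;> simp [lce2_nil_left, lce2_nil_right] at hlt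
  | cons x b' ih =>
    intro a c hba hbc hlt
    cases hba with
    | rel h =>
      rename_i y a'
      rw [lce2_cons] at hlt
      rw [if_neg (ne_of_gt h)] at hlt
      omega
    | cons hba' =>
      rename_i a'
      cases hbc with
      | rel h =>
        rename_i z c'
        constructor
        · rw [lce2_cons, if_neg (ne_of_lt h), lce2_cons, if_neg (ne_of_lt h)]
        · exact List.Lex.rel h
      | cons hbc' =>
        rename_i c'
        rw [lce2_cons, if_pos rfl, lce2_cons, if_pos rfl] at hlt
        obtain ⟨h1, h2⟩ := ih a' c' hba' hbc' (by omega)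
        refine ⟨?_, List.Lex.cons h2⟩
        rw [lce2_cons, if_pos rfl, lce2_cons, if_pos rfl, h1]

lemma llt_trans {u v w : List α} (h1 : Llt u v) (h2 : Llt v w) : Llt u w :=
  lt_trans (α := List α) h1 h2

lemma llt_asymm {u v : List α} (h1 : Llt u v) (h2 : Llt v u) : False :=
  asymm (r := List.Lex (· < ·)) h1 h2

/-- LCE acceleration for NGS/PGS, third case: with `l = prev₋₁[k]`, `r = next₋₁[k]`
and `lce(l, k) > lce(k, r)`, we get `lce(l, r) = lce(k, r)`, `x_r ≻ x_l`, and
`next₋₁[l] = r`. -/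

theorem lce_acceleration_inverse_gt {α : Type*} [LinearOrder α] (x : List α) (n l k r : ℕ)
    (hn : n = x.length)
    (hl1 : 1 ≤ l) (hlk : l < k) (hkr : k < r) (hrn : r ≤ n)
    (hlk' : Llt (suff x k) (suff x l))
    (hlk'' : ∀ m, l < m → m < k → Llt (suff x m) (suff x k))
    (hkr' : Llt (suff x k) (suff x r))
    (hkr'' : ∀ m, k < m → m < r → Llt (suff x m) (suff x k))
    (hgt : lce x k r < lce x l k) :
    lce x l r = lce x k r ∧ Llt (suff x l) (suff x r) ∧
      IsLeast {j | l < j ∧ j ≤ n ∧ Llt (suff x l) (suff x j)} r := by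
  obtain ⟨h1, h2⟩ := main_lemma (suff x k) (suff x l) (suff x r) hlk' hkr' hgt
  refine ⟨h1, h2, ⟨⟨lt_trans hlk hkr, hrn, h2⟩, ?_⟩⟩
  rintro j ⟨hj1, hj2, hj3⟩
  by_contra hcon
  push_neg at hcon
  rcases lt_trichotomy j k with hc | hc | hc
  · exact llt_asymm hj3 (llt_trans (hlk'' j hj1 hc) hlk')
  · subst hc; exact llt_asymm hj3 hlk'
  · exact llt_asymm hj3 (llt_trans (hkr'' j hc hcon) hlk')


end LynArr
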